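/- Let 3 ≤ k ≤ ⌊n/2⌋, n ≥ 2k and 2 ≤ m < m'. Then the set S^(k)_{m×n} ∪ S^(k)_{m'×n} (of matrices of the two different sizes) is not non-overlapping: for every matrix A ∈ S^(k)_{m×n} there exists a matrix B ∈ S^(k)_{m'×n} whose bottom m rows coincide with A, so that A can be completely overlapped on B. -/

import Mathlib

/-- A binary string (list of booleans, `false` = 0, `true` = 1) avoids `0^k`
and `1^k`, i.e. it contains neither `k` consecutive 0's nor `k` consecutive 1's. -/
def Avoids (k : ℕ) (s : List Bool) : Prop :=
  ¬ (List.replicate k false <:+: s) ∧ ¬ (List.replicate k true <:+: s)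
/-- The `i`-th row (0-indexed) of an `m × n` binary matrix, read as a binary string. -/
def row {m n : ℕ} (A : Fin m → Fin n → Bool) (i : ℕ) : List Bool :=
  List.ofFn (fun j : Fin n => if h : i < m then A ⟨i, h⟩ j else false)
/-- The set `S^(k)_{m×n}`: binary `m × n` matrices whose first row is
`1^{k−1} 0 w 1 0^{k−1}` (with `0w1` of length `n−2k+2` avoiding `0^k` and `1^k`),
whose middle rows end with `0` and avoid `0^k` and `1^k`, and whose last row is
`1^k v 0^k` (with `v` of length `n−2k` avoiding `0^k` and `1^k`). -/
def SkSet (m n k : ℕ) : Set (Fin m → Fin n → Bool) :=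
  {A |
    (∃ v : List Bool, v.length = n - 2*k + 2 ∧ Avoids k v ∧
        v.head? = some false ∧ v.getLast? = some true ∧
        row A 0 = List.replicate (k-1) true ++ v ++ List.replicate (k-1) false) ∧
    (∀ i : ℕ, 1 ≤ i → i ≤ m - 2 → Avoids k (row A i) ∧ (row A i).getLast? = some false) ∧
    (∃ v : List Bool, v.length = n - 2*k ∧ Avoids k v ∧
        row A (m-1) = List.replicate k true ++ v ++ List.replicate k false)}

/-- Index characterization of `replicate k b` being an infix. -/
lemma replicate_isInfix_iff {b : Bool} {k : ℕ} {s : List Bool} :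
    List.replicate k b <:+: s ↔ ∃ o, o + k ≤ s.length ∧ ∀ j < k, s[o+j]? = some b := by
  constructor
  · rintro ⟨p, q, hpq⟩
    refine ⟨p.length, ?_, ?_⟩
    · have := congrArg List.length hpq
      simp at this; omega
    · intro j hj
      rw [← hpq, List.getElem?_append_left (by simp; omega),
        List.getElem?_append_right (by omega), List.getElem?_replicate,
        if_pos (by omega)]
  · rintro ⟨o, ho, hv⟩
    have hmid : List.replicate k b = (s.drop o).take k := by
      apply List.ext_getElem?
      intro j
      rw [List.getElem?_take, List.getElem?_drop, List.getElem?_replicate]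
      by_cases hj : j < k
      · simp [hj, hv j hj]
      · simp [hj]
    refine ⟨s.take o, s.drop (o+k), ?_⟩
    have hd : s.drop (o+k) = (s.drop o).drop k := List.drop_drop.symm
    rw [hmid, hd, List.append_assoc, List.take_append_drop, List.take_append_drop]

/-- The "wrapped" list `1^{k-1} ++ v ++ 0^{k-1}` avoids `0^k` and `1^k`
whenever `v` does, starts with `0` and ends with `1`. -/
lemma avoids_wrap {k : ℕ} (hk : 3 ≤ k) (v : List Bool) (hA : Avoids k v)
    (h0 : v.head? = some false) (h1 : v.getLast? = some true) :
    Avoids k (List.replicate (k-1) true ++ v ++ List.replicate (k-1) false) := by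
  set L := v.length with hL
  have hL1 : 1 ≤ L := by
    rcases v with _ | ⟨a, t⟩
    · simp at h0
    · simp [hL]
  have hv0 : v[0]? = some false := by rw [← List.head?_eq_getElem?]; exact h0
  have hvlast : v[L-1]? = some true := by rw [← List.getLast?_eq_getElem?]; exact h1
  set s := List.replicate (k-1) true ++ v ++ List.replicate (k-1) false with hs
  have hslen : s.length = (k-1) + L + (k-1) := by
    rw [hs, List.length_append, List.length_append, List.length_replicate,
      List.length_replicate]
  -- getElem? of s in the three regions
  have hget1 : ∀ i, i < k-1 → s[i]? = some true := by
    intro i hi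
    rw [hs, List.getElem?_append_left (by simp; omega),
      List.getElem?_append_left (by simp; omega), List.getElem?_replicate,
      if_pos hi]
  have hget2 : ∀ i, k-1 ≤ i → i < k-1+L → s[i]? = v[i-(k-1)]? := by
    intro i hi1 hi2
    rw [hs, List.getElem?_append_left (by simp; omega),
      List.getElem?_append_right (by simp; omega)]
    simp
  have hget3 : ∀ i, k-1+L ≤ i → i < (k-1)+L+(k-1) → s[i]? = some false := by
    intro i hi1 hi2
    rw [hs, List.getElem?_append_right (by simp; omega), List.getElem?_replicate,
      if_pos (by simp; omega)]
  constructor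
  · -- no 0^k
    intro hin
    rw [replicate_isInfix_iff] at hin
    obtain ⟨o, ho, hval⟩ := hin
    rw [hslen] at ho
    have ho1 : k - 1 ≤ o := by
      by_contra hc
      have h := hval 0 (by omega)
      rw [Nat.add_zero, hget1 o (by omega)] at h
      simp at h
    by_cases hc : o ≤ k - 1 + L - 1 ∧ k - 1 + L - 1 < o + k
    · have h := hval (k-1+L-1-o) (by omega)
      rw [show o + (k-1+L-1-o) = k-1+L-1 by omega,
        hget2 _ (by omega) (by omega), show k-1+L-1-(k-1) = L-1 by omega,
        hvlast] at h
      simp at h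
    · push_neg at hc
      by_cases ho2 : o + k ≤ k - 1 + L
      · rcases hA with ⟨hF, _⟩
        apply hF
        rw [replicate_isInfix_iff]
        refine ⟨o - (k-1), by omega, ?_⟩
        intro j hj
        have h := hval j hj
        rw [hget2 _ (by omega) (by omega),
          show o + j - (k-1) = o - (k-1) + j by omega] at h
        exact h
      · have hc2 := hc (by omega)
        omega
  · -- no 1^k
    intro hin
    rw [replicate_isInfix_iff] at hin
    obtain ⟨o, ho, hval⟩ := hin
    rw [hslen] at ho
    by_cases hc : o ≤ k - 1
    · have h := hval (k-1-o) (by omega)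
      rw [show o + (k-1-o) = k-1 by omega, hget2 _ (by omega) (by omega),
        show k-1-(k-1) = 0 by omega, hv0] at h
      simp at h
    · push_neg at hc
      by_cases ho2 : o + k ≤ k - 1 + L
      · rcases hA with ⟨_, hT⟩
        apply hT
        rw [replicate_isInfix_iff]
        refine ⟨o - (k-1), by omega, ?_⟩
        intro j hj
        have h := hval j hj
        rw [hget2 _ (by omega) (by omega),
          show o + j - (k-1) = o - (k-1) + j by omega] at h
        exact h
      · have h := hval (k-1+L-o) (by omega)
        rw [show o + (k-1+L-o) = k-1+L by omega,
          hget3 _ (by omega) (by omega)] at h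
        simp at h

/-- The alternating function used for the newly added middle rows. -/
def altFn (n : ℕ) (j : ℕ) : Bool := decide ((n - 1 - j) % 2 = 1)

lemma avoids_alt {k n : ℕ} (hk : 3 ≤ k) :
    Avoids k (List.ofFn (fun j : Fin n => altFn n j)) := by
  have key : ∀ b : Bool, ¬ (List.replicate k b <:+: List.ofFn (fun j : Fin n => altFn n j)) := by
    intro b hin
    rw [replicate_isInfix_iff] at hin
    obtain ⟨o, ho, hval⟩ := hin
    simp only [List.length_ofFn] at ho
    have h0 := hval 0 (by omega)
    have h1 := hval 1 (by omega)
    rw [List.getElem?_ofFn] at h0 h1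
    simp only [List.ofFnNthVal, show o + 0 < n by omega, show o + 1 < n by omega,
      dif_pos] at h0 h1
    have h01 : altFn n (o+0) = altFn n (o+1) := Option.some.inj (h0.trans h1.symm)
    simp only [altFn, decide_eq_decide] at h01
    omega
  exact ⟨key false, key true⟩

/-- The function for the new top row's middle part `v`. -/
def vFn (L : ℕ) (j : ℕ) : Bool := decide (j ≠ 0 ∧ (L - 1 - j) % 2 = 0)

lemma avoids_vFn {k L : ℕ} (hk : 3 ≤ k) :
    Avoids k (List.ofFn (fun j : Fin L => vFn L j)) := by
  have key : ∀ b : Bool, ¬ (List.replicate k b <:+: List.ofFn (fun j : Fin L => vFn L j)) := by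
    intro b hin
    rw [replicate_isInfix_iff] at hin
    obtain ⟨o, ho, hval⟩ := hin
    simp only [List.length_ofFn] at ho
    have h1 := hval 1 (by omega)
    have h2 := hval 2 (by omega)
    rw [List.getElem?_ofFn] at h1 h2
    simp only [List.ofFnNthVal, show o + 1 < L by omega, show o + 2 < L by omega,
      dif_pos] at h1 h2
    have h12 : vFn L (o+1) = vFn L (o+2) := Option.some.inj (h1.trans h2.symm)
    simp only [vFn, decide_eq_decide] at h12
    omega
  exact ⟨key false, key true⟩

theorem SkSet_extend_rows (m m' n k : ℕ) (hk : 3 ≤ k) (hkn : k ≤ n / 2)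
    (hn : 2 * k ≤ n) (hm : 2 ≤ m) (hmm' : m < m') :
    ∀ A ∈ SkSet m n k, ∃ B ∈ SkSet m' n k,
      ∀ i : ℕ, i < m → row B (m' - m + i) = row A i := by
  intro A hA
  obtain ⟨⟨w, hwlen, hwav, hw0, hw1, hrow0⟩, hmid, hlast⟩ := hA
  set d := m' - m with hd
  have hd1 : 1 ≤ d := by omega
  set L := n - 2*k + 2 with hLdef
  set v : List Bool := List.ofFn (fun j : Fin L => vFn L j) with hvdef
  have hL2 : 2 ≤ L := by omega
  set B : Fin m' → Fin n → Bool := fun i j =>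
    if h : (i : ℕ) < d then
      (if (i : ℕ) = 0 then
        (if (j:ℕ) < k-1 then true else if (j:ℕ) < k-1+L then vFn L ((j:ℕ)-(k-1)) else false)
      else altFn n j)
    else A ⟨(i:ℕ) - d, by omega⟩ j with hB
  -- row transfer
  have htrans : ∀ i : ℕ, i < m → row B (d + i) = row A i := by
    intro i hi
    unfold row
    congr 1
    funext j
    have h1 : d + i < m' := by omega
    have h2 : ¬ (d + i < d) := by omega
    rw [dif_pos h1, dif_pos hi]
    simp only [hB]
    rw [dif_neg h2]
    congr 1
    apply Fin.ext
    show d + i - d = i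
    omega
  refine ⟨B, ⟨?_, ?_, ?_⟩, htrans⟩
  · -- first row of B
    refine ⟨v, by simp [hvdef], avoids_vFn hk, ?_, ?_, ?_⟩
    · rw [hvdef, List.head?_eq_getElem?, List.getElem?_ofFn]
      simp [List.ofFnNthVal, show 0 < L by omega, vFn]
    · rw [hvdef, List.getLast?_eq_getElem?]
      simp only [List.length_ofFn]
      rw [List.getElem?_ofFn]
      simp only [List.ofFnNthVal, show L - 1 < L by omega, dif_pos]
      have hnz : L - 1 ≠ 0 := by omega
      simp [vFn, hnz]
    · -- row B 0 = 1^{k-1} ++ v ++ 0^{k-1}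
      apply List.ext_getElem?
      intro i
      unfold row
      rw [List.getElem?_ofFn]
      by_cases hi : i < n
      · simp only [List.ofFnNthVal, hi, dif_pos]
        have h0m : (0:ℕ) < m' := by omega
        rw [dif_pos h0m]
        simp only [hB]
        rw [dif_pos (show ((⟨0, h0m⟩ : Fin m') : ℕ) < d from hd1)]
        simp only [if_true]
        by_cases h1 : i < k-1
        · rw [if_pos h1, List.getElem?_append_left (by simp [hvdef]; omega),
            List.getElem?_append_left (by simp; omega), List.getElem?_replicate,
            if_pos h1]
        · rw [if_neg h1]
          by_cases h2 : i < k-1+L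
          · rw [if_pos h2, List.getElem?_append_left (by simp [hvdef]; omega),
              List.getElem?_append_right (by simp; omega)]
            rw [hvdef, List.getElem?_ofFn]
            simp only [List.ofFnNthVal, List.length_replicate,
              show i - (k-1) < L by omega, dif_pos]
          · rw [if_neg h2,
              List.getElem?_append_right (by simp [hvdef]; omega),
              List.getElem?_replicate, if_pos (by simp [hvdef]; omega)]
      · simp only [List.ofFnNthVal, hi, dif_neg, not_false_iff]
        symm
        apply List.getElem?_eq_none
        rw [List.length_append, List.length_append, List.length_replicate,
          List.length_replicate, hvdef, List.length_ofFn]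
        omega
  · -- middle rows of B
    intro i hi1 hi2
    by_cases hcase : i < d
    · -- newly added alternating row
      have hrowi : row B i = List.ofFn (fun j : Fin n => altFn n j) := by
        unfold row
        congr 1
        funext j
        have him : i < m' := by omega
        rw [dif_pos him]
        simp only [hB]
        rw [dif_pos (show ((⟨i, him⟩ : Fin m') : ℕ) < d from hcase)]
        rw [if_neg (by omega : ¬ i = 0)]
      rw [hrowi]
      refine ⟨avoids_alt hk, ?_⟩
      rw [List.getLast?_eq_getElem?]
      simp only [List.length_ofFn]
      rw [List.getElem?_ofFn]
      simp only [List.ofFnNthVal, show n - 1 < n by omega, dif_pos]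
      have hz : n - 1 - (n - 1) = 0 := by omega
      simp [altFn, hz]
    · -- a row of A
      push_neg at hcase
      have heq : i = d + (i - d) := by omega
      rw [heq, htrans (i - d) (by omega)]
      by_cases h0 : i - d = 0
      · rw [h0, hrow0]
        refine ⟨avoids_wrap hk w hwav hw0 hw1, ?_⟩
        rw [List.getLast?_append, List.getLast?_eq_getElem?]
        simp [List.getElem?_replicate]
        omega
      · exact hmid (i - d) (by omega) (by omega)
  · -- last row of B
    obtain ⟨u, hulen, huav, hurow⟩ := hlast
    refine ⟨u, hulen, huav, ?_⟩
    have hlast' : m' - 1 = d + (m - 1) := by omega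
    rw [hlast', htrans (m-1) (by omega)]
    exact hurow
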